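/- Cauchy's integral formula for divided differences: for a function g analytic in a region containing a contour enclosing points x_0,...,x_n, the divided difference satisfies g[x_0,...,x_n] = (1/2πi) ∮ g(z)/((z−x_0)···(z−x_n)) dz. -/

import Mathlib

/-- The divided difference `g[x_0,…,x_n]`, defined recursively by `g[x] = g(x)` and
`g[x_0,…,x_n] = (g[x_1,…,x_n] − g[x_0,…,x_{n−1}])/(x_n − x_0)`. -/
noncomputable def divDiffC (g : ℂ → ℂ) : (n : ℕ) → (Fin (n + 1) → ℂ) → ℂ
  | 0, x => g (x 0)
  | n + 1, x =>
      (divDiffC g n (fun i => x i.succ) - divDiffC g n (fun i => x i.castSucc)) /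
        (x (Fin.last (n + 1)) - x 0)

open Metric Complex

lemma sphere_ne {R : ℝ} {z w : ℂ} (hz : z ∈ Metric.sphere (0 : ℂ) R)
    (hw : w ∈ Metric.ball (0 : ℂ) R) : z - w ≠ 0 := by
  intro h
  rw [sub_eq_zero] at h
  subst h
  simp only [mem_sphere_iff_norm, sub_zero] at hz
  simp only [mem_ball, dist_zero_right] at hw
  simp [hz] at hw

lemma integrable_aux {R : ℝ} (hR : 0 ≤ R) {g : ℂ → ℂ} {m : ℕ}
    (hg : DifferentiableOn ℂ g (Metric.closedBall 0 R)) (y : Fin m → ℂ)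
    (hy : ∀ j, y j ∈ Metric.ball (0 : ℂ) R) :
    CircleIntegrable (fun z => g z / ∏ j, (z - y j)) 0 R := by
  refine ContinuousOn.circleIntegrable hR ?_
  have hgc : ContinuousOn g (Metric.sphere (0 : ℂ) R) :=
    hg.continuousOn.mono sphere_subset_closedBall
  refine hgc.div (continuousOn_finset_prod _ fun j _ => by fun_prop) ?_
  intro z hz
  exact Finset.prod_ne_zero_iff.2 fun j _ => sphere_ne hz (hy j)

/-- Cauchy's integral formula for divided differences: for `g` analytic on a region
containing a contour enclosing the (distinct) points `x_0,…,x_n`,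
`g[x_0,…,x_n] = (1/2πi) ∮ g(z)/((z−x_0)⋯(z−x_n)) dz`. -/
theorem divDiff_eq_contour_integral (g : ℂ → ℂ) (n : ℕ) (R : ℝ)
    (x : Fin (n + 1) → ℂ) (hx : Function.Injective x)
    (hmem : ∀ j, x j ∈ Metric.ball (0 : ℂ) R)
    (hg : DifferentiableOn ℂ g (Metric.closedBall 0 R)) :
    divDiffC g n x =
      (2 * (Real.pi : ℂ) * Complex.I)⁻¹ *
        ∮ z in C(0, R), g z / ∏ j, (z - x j) := by
  have hR : 0 < R := by
    have := hmem 0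
    rcases lt_or_ge 0 R with h | h
    · exact h
    · simp [Metric.ball_eq_empty.2 h] at this
  induction n with
  | zero =>
    have key := (hg.circleIntegral_sub_inv_smul (c := 0) (w := x 0) (hmem 0))
    simp only [smul_eq_mul] at key
    have : (∮ z in C(0, R), g z / ∏ j, (z - x j)) =
        ∮ z in C(0, R), (z - x 0)⁻¹ * g z := by
      refine circleIntegral.integral_congr hR.le fun z _ => ?_
      simp [Fin.prod_univ_one, div_eq_inv_mul]
    rw [divDiffC, this, key]
    have h2pi : (2 * (Real.pi : ℂ) * Complex.I) ≠ 0 := by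
      simp [Real.pi_ne_zero, Complex.I_ne_zero, Complex.ofReal_ne_zero]
    field_simp
  | succ m ih =>
    have hxs : Function.Injective (fun i : Fin (m + 1) => x i.succ) :=
      fun i j h => Fin.succ_injective _ (hx h)
    have hxc : Function.Injective (fun i : Fin (m + 1) => x i.castSucc) :=
      fun i j h => (Fin.castSucc_injective _) (hx h)
    have h1 := ih (fun i => x i.succ) hxs (fun j => hmem _)
    have h2 := ih (fun i => x i.castSucc) hxc (fun j => hmem _)
    have hne : x (Fin.last (m + 1)) - x 0 ≠ 0 := by
      rw [sub_ne_zero]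
      intro h
      exact absurd (hx h) (by simp [Fin.ext_iff])
    have hint1 := integrable_aux hR.le hg (fun i : Fin (m + 1) => x i.succ) (fun j => hmem _)
    have hint2 := integrable_aux hR.le hg (fun i : Fin (m + 1) => x i.castSucc) (fun j => hmem _)
    have hsub := circleIntegral.integral_sub hint1 hint2
    beta_reduce at h1 h2 hsub
    have key : (∮ z in C(0, R), (g z / ∏ j : Fin (m + 1), (z - x j.succ) -
        g z / ∏ j : Fin (m + 1), (z - x j.castSucc))) =
        (x (Fin.last (m + 1)) - x 0) * ∮ z in C(0, R), g z / ∏ j, (z - x j) := by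
      rw [← smul_eq_mul, ← circleIntegral.integral_smul]
      refine circleIntegral.integral_congr hR.le fun z hz => ?_
      have hA : (∏ j, (z - x j)) = (z - x 0) * ∏ j : Fin (m + 1), (z - x j.succ) :=
        Fin.prod_univ_succ _
      have hB : (∏ j, (z - x j)) =
          (∏ j : Fin (m + 1), (z - x j.castSucc)) * (z - x (Fin.last (m + 1))) :=
        Fin.prod_univ_castSucc _
      have hz0 : ∀ j, z - x j ≠ 0 := fun j => sphere_ne hz (hmem j)
      have hTA : (∏ j : Fin (m + 1), (z - x j.succ)) ≠ 0 :=
        Finset.prod_ne_zero_iff.2 fun j _ => hz0 _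
      have hTB : (∏ j : Fin (m + 1), (z - x j.castSucc)) ≠ 0 :=
        Finset.prod_ne_zero_iff.2 fun j _ => hz0 _
      have hAll : (∏ j, (z - x j)) ≠ 0 := Finset.prod_ne_zero_iff.2 fun j _ => hz0 _
      simp only [smul_eq_mul]
      rw [div_sub_div _ _ hTA hTB, mul_div_assoc',
        div_eq_div_iff (mul_ne_zero hTA hTB) hAll]
      linear_combination g z * (∏ j : Fin (m + 1), (z - x j.castSucc)) * hA -
        (∏ j : Fin (m + 1), (z - x j.succ)) * g z * hB
    rw [divDiffC, h1, h2, ← mul_sub, ← hsub, key]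
    field_simp
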